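/- Let M ∈ ℝ^{N×N} have eigenvalues λ_1, ..., λ_N (with multiplicity, over ℂ), and let A ∈ ℂ^{k×k}, B ∈ ℂ^{k×k}. Then the characteristic polynomial of I_N ⊗ A - M ⊗ B equals the product over i of the characteristic polynomials of A - λ_i B. In particular, I_N ⊗ A - M ⊗ B is Hurwitz if and only if A - λ_i B is Hurwitz for every i. -/

import Mathlib

open Matrix Kronecker Polynomial

theorem exists_triangular : ∀ (n : ℕ) (M : Matrix (Fin n) (Fin n) ℂ),
    ∃ T : (Matrix (Fin n) (Fin n) ℂ)ˣ,
      (((T⁻¹ : (Matrix (Fin n) (Fin n) ℂ)ˣ) : Matrix (Fin n) (Fin n) ℂ) * M * (T : Matrix (Fin n) (Fin n) ℂ)).BlockTriangular id := by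
  intro n
  induction n with
  | zero => exact fun M => ⟨1, fun i j _ => Fin.elim0 i⟩
  | succ n ih =>
    intro M
    obtain ⟨μ, hμ⟩ := Module.End.exists_eigenvalue (Matrix.toLin' M)
    obtain ⟨v, hv⟩ := hμ.exists_hasEigenvector
    have hv0 : v ≠ 0 := hv.right
    have hs : LinearIndepOn ℂ id ({v} : Set (Fin (n+1) → ℂ)) :=
      LinearIndepOn.singleton hv0
    let b0 := Module.Basis.extend hs
    have htv : v ∈ hs.extend (Set.subset_univ _) :=
      hs.subset_extend _ rfl
    haveI : Fintype (hs.extend (Set.subset_univ ({v} : Set (Fin (n+1) → ℂ)))) :=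
      FiniteDimensional.fintypeBasisIndex b0
    have hcard : Fintype.card (hs.extend (Set.subset_univ ({v} : Set (Fin (n+1) → ℂ)))) = n + 1 := by
      rw [← Module.finrank_eq_card_basis b0, Module.finrank_fin_fun]
    let e0 := Fintype.equivFinOfCardEq hcard
    let e : _ ≃ Fin (n+1) := e0.trans (Equiv.swap (e0 ⟨v, htv⟩) 0)
    let b := b0.reindex e
    have hb0 : b 0 = v := by
      have h1 : e.symm 0 = ⟨v, htv⟩ := by
        simp [e, Equiv.symm_trans_apply, Equiv.symm_swap, Equiv.swap_apply_right]
      rw [show b 0 = b0 (e.symm 0) from Module.Basis.reindex_apply b0 e 0, h1]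
      exact congrFun (Module.Basis.coe_extend hs) ⟨v, htv⟩
    -- matrix of f in basis b
    set f := Matrix.toLin' M with hf
    set c : Module.Basis (Fin (n+1)) ℂ (Fin (n+1) → ℂ) := Pi.basisFun ℂ (Fin (n+1)) with hc
    set M' := LinearMap.toMatrix b b f with hM'
    have hMc : LinearMap.toMatrix c c f = M := by
      rw [hc, LinearMap.toMatrix_eq_toMatrix', hf, LinearMap.toMatrix'_toLin']
    let Q : (Matrix (Fin (n+1)) (Fin (n+1)) ℂ)ˣ :=
      ⟨c.toMatrix b, b.toMatrix c, Module.Basis.toMatrix_mul_toMatrix_flip c b,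
        Module.Basis.toMatrix_mul_toMatrix_flip b c⟩
    have hQ : ((Q⁻¹ : (Matrix (Fin (n+1)) (Fin (n+1)) ℂ)ˣ) : Matrix _ _ ℂ) * M *
        (Q : Matrix _ _ ℂ) = M' := by
      show b.toMatrix c * M * c.toMatrix b = M'
      rw [← hMc, basis_toMatrix_mul_linearMap_toMatrix_mul_basis_toMatrix]
    have h0 : ∀ i : Fin n, M' i.succ 0 = 0 := by
      intro i
      rw [hM', LinearMap.toMatrix_apply, hb0]
      have : f v = μ • v := hv.apply_eq_smul
      rw [this, _root_.map_smul, ← hb0, Module.Basis.repr_self]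
      simp [Finsupp.single_eq_of_ne (Ne.symm (Fin.succ_ne_zero i))]
    obtain ⟨T₁, hT₁⟩ := ih (M'.submatrix Fin.succ Fin.succ)
    let e2 : Fin 1 ⊕ Fin n ≃ Fin (n+1) := finSumFinEquiv.trans (finCongr (Nat.add_comm 1 n))
    have he2l : ∀ i : Fin 1, e2 (Sum.inl i) = 0 := by
      intro i
      apply Fin.ext
      simp [e2, Fin.val_eq_zero]
    have he2r : ∀ j : Fin n, e2 (Sum.inr j) = j.succ := by
      intro j
      apply Fin.ext
      simp [e2, Nat.add_comm]
    set F := fromBlocks (Matrix.of fun (_ : Fin 1) (_ : Fin 1) => M' 0 0)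
      (Matrix.of fun (_ : Fin 1) (j : Fin n) => M' 0 j.succ) 0
      (M'.submatrix Fin.succ Fin.succ) with hFdef
    have hF : M'.submatrix e2 e2 = F := by
      ext i j
      cases i with
      | inl i =>
        cases j with
        | inl j => simp [hFdef, he2l, Fin.eq_zero i, Fin.eq_zero j]
        | inr j => simp [hFdef, he2l, he2r, Fin.eq_zero i]
      | inr i =>
        cases j with
        | inl j => simp [hFdef, he2l, he2r, Fin.eq_zero j, h0 i]
        | inr j => simp [hFdef, he2r]
    have hM'F : M' = F.submatrix e2.symm e2.symm := by
      rw [← hF, submatrix_submatrix]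
      simp
    let G : (Matrix (Fin (n+1)) (Fin (n+1)) ℂ)ˣ :=
      ⟨(fromBlocks 1 0 0 (T₁ : Matrix (Fin n) (Fin n) ℂ)).submatrix e2.symm e2.symm,
       (fromBlocks 1 0 0 ((T₁⁻¹ : _ˣ) : Matrix (Fin n) (Fin n) ℂ)).submatrix e2.symm e2.symm,
       by rw [submatrix_mul_equiv, fromBlocks_multiply]
          simp only [Matrix.mul_one, Matrix.one_mul, Matrix.mul_zero, Matrix.zero_mul,
            add_zero, zero_add, Units.mul_inv]
          rw [fromBlocks_one, submatrix_one_equiv],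
       by rw [submatrix_mul_equiv, fromBlocks_multiply]
          simp only [Matrix.mul_one, Matrix.one_mul, Matrix.mul_zero, Matrix.zero_mul,
            add_zero, zero_add, Units.inv_mul]
          rw [fromBlocks_one, submatrix_one_equiv]⟩
    refine ⟨Q * G, ?_⟩
    have key : ((((Q * G)⁻¹ : _ˣ)) : Matrix (Fin (n+1)) (Fin (n+1)) ℂ) * M * ((Q * G : _ˣ) : Matrix _ _ ℂ)
        = ((fromBlocks 1 0 0 ((T₁⁻¹ : _ˣ) : Matrix (Fin n) (Fin n) ℂ)) * F *
            (fromBlocks 1 0 0 (T₁ : Matrix (Fin n) (Fin n) ℂ))).submatrix e2.symm e2.symm := by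
      have : (((Q * G)⁻¹ : _ˣ) : Matrix (Fin (n+1)) (Fin (n+1)) ℂ)
          = ((G⁻¹ : _ˣ) : Matrix _ _ ℂ) * ((Q⁻¹ : _ˣ) : Matrix _ _ ℂ) := by
        rw [_root_.mul_inv_rev, Units.val_mul]
      rw [this]
      have h2 : ((G⁻¹ : _ˣ) : Matrix (Fin (n+1)) (Fin (n+1)) ℂ) * ((Q⁻¹ : _ˣ) : Matrix _ _ ℂ) * M *
          ((Q * G : _ˣ) : Matrix _ _ ℂ)
          = ((G⁻¹ : _ˣ) : Matrix _ _ ℂ) * (((Q⁻¹ : _ˣ) : Matrix _ _ ℂ) * M * (Q : Matrix _ _ ℂ)) *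
            (G : Matrix _ _ ℂ) := by
        rw [Units.val_mul]
        simp only [Matrix.mul_assoc]
      rw [h2, hQ, hM'F]
      show (fromBlocks 1 0 0 ((T₁⁻¹ : _ˣ) : Matrix (Fin n) (Fin n) ℂ)).submatrix e2.symm e2.symm *
          F.submatrix e2.symm e2.symm *
          (fromBlocks 1 0 0 (T₁ : Matrix (Fin n) (Fin n) ℂ)).submatrix e2.symm e2.symm = _
      rw [submatrix_mul_equiv, submatrix_mul_equiv]
    rw [key, ← Matrix.reindex_apply, blockTriangular_reindex_iff]
    rw [hFdef]
    simp only [fromBlocks_multiply, Matrix.mul_zero, Matrix.zero_mul, Matrix.mul_one,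
      Matrix.one_mul, add_zero, zero_add]
    rintro (i | i) (j | j) hlt
    · simp only [Function.comp_apply, id_eq, he2l] at hlt
      exact absurd hlt (lt_irrefl _)
    · simp only [Function.comp_apply, id_eq, he2l, he2r] at hlt
      exact absurd hlt (Fin.not_lt_zero _)
    · simp [fromBlocks]
    · have : j < i := by
        simp only [Function.comp_apply, id_eq, he2r] at hlt
        exact Fin.succ_lt_succ_iff.mp hlt
      have := hT₁ (show (id j : Fin n) < id i from this)
      simpa [fromBlocks, Matrix.mul_assoc] using this

open Matrix Kronecker Polynomial

theorem my_charpoly_units_conj {n : Type*} [Fintype n] [DecidableEq n] {R : Type*} [CommRing R] (T : (Matrix n n R)ˣ)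
    (M : Matrix n n R) :
    ((T : Matrix n n R) * M * ((T⁻¹ : _ˣ) : Matrix n n R)).charpoly
      = M.charpoly := by
  let φ : Matrix n n R →+* Matrix n n R[X] :=
    (Polynomial.C : R →+* R[X]).mapMatrix
  have hφ1 : φ (T : Matrix n n R) * φ ((T⁻¹ : _ˣ) : Matrix n n R) = 1 := by
    rw [← _root_.map_mul, Units.mul_inv, _root_.map_one]
  have hcm : charmatrix ((T : Matrix _ _ R) * M * ((T⁻¹ : _ˣ) : Matrix n n R))
      = φ (T : Matrix _ _ R) * charmatrix M * φ ((T⁻¹ : _ˣ) : Matrix n n R) := by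
    show Matrix.scalar n (X : R[X]) - φ _ = _
    rw [show charmatrix M = Matrix.scalar n (X : R[X]) - φ M from rfl]
    rw [mul_sub, sub_mul, _root_.map_mul, _root_.map_mul]
    congr 1
    have hcomm : φ (T : Matrix _ _ R) * Matrix.scalar n (X : R[X])
        = Matrix.scalar n (X : R[X]) * φ (T : Matrix _ _ R) :=
      (Matrix.scalar_commute (X : R[X]) (fun r => Commute.all _ _) _).symm
    rw [hcomm, mul_assoc, hφ1, mul_one]
  have hφ2 : φ ((T⁻¹ : _ˣ) : Matrix n n R) * φ (T : Matrix n n R) = 1 := by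
    rw [← _root_.map_mul, Units.inv_mul, _root_.map_one]
  show (charmatrix _).det = (charmatrix M).det
  rw [hcm, Matrix.det_mul, Matrix.det_mul, mul_comm, ← mul_assoc, ← Matrix.det_mul, hφ2]
  simp

theorem kron_triangular_charpoly {N k : ℕ} (U : Matrix (Fin N) (Fin N) ℂ)
    (hU : U.BlockTriangular id) (A B : Matrix (Fin k) (Fin k) ℂ) :
    ((1 : Matrix (Fin N) (Fin N) ℂ) ⊗ₖ A - U ⊗ₖ B).charpoly
      = ∏ i, (A - U i i • B).charpoly := by
  rcases isEmpty_or_nonempty (Fin k) with hk | hk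
  · have h1 : ((1 : Matrix (Fin N) (Fin N) ℂ) ⊗ₖ A - U ⊗ₖ B).charpoly = 1 :=
      Matrix.det_isEmpty
    have h2 : ∀ i, (A - U i i • B).charpoly = 1 := fun i => Matrix.det_isEmpty
    rw [h1]
    simp [h2]
  · have hb : ((1 : Matrix (Fin N) (Fin N) ℂ) ⊗ₖ A - U ⊗ₖ B).BlockTriangular Prod.fst := by
      rintro ⟨i, p⟩ ⟨j, q⟩ h
      have hij : (j : Fin N) ≠ i := ne_of_lt h
      simp only [Matrix.sub_apply, Matrix.kroneckerMap_apply]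
      rw [Matrix.one_apply_ne (Ne.symm hij), hU (show (id j : Fin N) < id i from h)]
      ring
    rw [hb.charpoly]
    refine Eq.trans (Finset.prod_congr (s₂ := Finset.univ) ?_ fun a _ => rfl) ?_
    · apply Finset.eq_univ_of_forall
      intro a
      have h := Finset.mem_image_of_mem Prod.fst (Finset.mem_univ (a, Classical.arbitrary (Fin k)))
      convert h using 2
    apply Finset.prod_congr rfl
    intro a _
    let ea : {x : Fin N × Fin k // x.1 = a} ≃ Fin k :=
      ⟨fun x => x.1.2, fun p => ⟨(a, p), rfl⟩,
       fun ⟨⟨i, p⟩, h⟩ => by subst h; rfl, fun p => rfl⟩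
    have hXeq : Matrix.reindex ea ea
        ((((1 : Matrix (Fin N) (Fin N) ℂ) ⊗ₖ A - U ⊗ₖ B)).toSquareBlock Prod.fst a)
        = A - U a a • B := by
      ext p q
      have h1 : (ea.symm p).1 = (a, p) := rfl
      have h2 : (ea.symm q).1 = (a, q) := rfl
      simp only [Matrix.reindex_apply, Matrix.submatrix_apply, Matrix.toSquareBlock_def,
        Matrix.of_apply]
      rw [h1, h2]
      simp only [Matrix.sub_apply, Matrix.kroneckerMap_apply, Matrix.one_apply_eq,
        Matrix.smul_apply, smul_eq_mul, one_mul]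
    have hfin := congrArg Matrix.charpoly hXeq
    rw [Matrix.charpoly_reindex] at hfin
    convert hfin using 2

theorem kronecker_charpoly_prod_and_hurwitz' {N k : ℕ}
    (Mc : Matrix (Fin N) (Fin N) ℂ) (lam : Fin N → ℂ)
    (hlam : Mc.charpoly = ∏ i, (X - C (lam i)))
    (hTri : ∃ T : (Matrix (Fin N) (Fin N) ℂ)ˣ,
      (((T⁻¹ : _ˣ) : Matrix (Fin N) (Fin N) ℂ) * Mc * (T : Matrix (Fin N) (Fin N) ℂ)).BlockTriangular id)
    (A B : Matrix (Fin k) (Fin k) ℂ) :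
    ((1 : Matrix (Fin N) (Fin N) ℂ) ⊗ₖ A - Mc ⊗ₖ B).charpoly =
      ∏ i, (A - lam i • B).charpoly := by
  obtain ⟨T, hU⟩ := hTri
  set U := ((T⁻¹ : _ˣ) : Matrix (Fin N) (Fin N) ℂ) * Mc * (T : Matrix (Fin N) (Fin N) ℂ) with hUdef
  have hMc : Mc = (T : Matrix (Fin N) (Fin N) ℂ) * U * ((T⁻¹ : _ˣ) : Matrix (Fin N) (Fin N) ℂ) := by
    rw [hUdef]
    rw [show (T : Matrix (Fin N) (Fin N) ℂ) * (((T⁻¹ : _ˣ) : Matrix (Fin N) (Fin N) ℂ) * Mc *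
          (T : Matrix (Fin N) (Fin N) ℂ)) * ((T⁻¹ : _ˣ) : Matrix (Fin N) (Fin N) ℂ)
        = ((T : Matrix (Fin N) (Fin N) ℂ) * ((T⁻¹ : _ˣ) : Matrix (Fin N) (Fin N) ℂ)) * Mc *
          ((T : Matrix (Fin N) (Fin N) ℂ) * ((T⁻¹ : _ˣ) : Matrix (Fin N) (Fin N) ℂ)) from by
        simp only [Matrix.mul_assoc]]
    rw [Units.mul_inv]
    simp
  -- Kronecker unit
  let TK : (Matrix (Fin N × Fin k) (Fin N × Fin k) ℂ)ˣ :=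
    ⟨(T : Matrix (Fin N) (Fin N) ℂ) ⊗ₖ (1 : Matrix (Fin k) (Fin k) ℂ),
     ((T⁻¹ : _ˣ) : Matrix (Fin N) (Fin N) ℂ) ⊗ₖ (1 : Matrix (Fin k) (Fin k) ℂ),
     by rw [← Matrix.mul_kronecker_mul, Units.mul_inv, Matrix.one_mul, Matrix.one_kronecker_one],
     by rw [← Matrix.mul_kronecker_mul, Units.inv_mul, Matrix.one_mul, Matrix.one_kronecker_one]⟩
  have hconj : (1 : Matrix (Fin N) (Fin N) ℂ) ⊗ₖ A - Mc ⊗ₖ B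
      = (TK : Matrix _ _ ℂ) * ((1 : Matrix (Fin N) (Fin N) ℂ) ⊗ₖ A - U ⊗ₖ B) *
        ((TK⁻¹ : _ˣ) : Matrix _ _ ℂ) := by
    show _ = ((T : Matrix (Fin N) (Fin N) ℂ) ⊗ₖ (1 : Matrix (Fin k) (Fin k) ℂ)) * _ *
      (((T⁻¹ : _ˣ) : Matrix (Fin N) (Fin N) ℂ) ⊗ₖ (1 : Matrix (Fin k) (Fin k) ℂ))
    rw [Matrix.mul_sub, Matrix.sub_mul, ← Matrix.mul_kronecker_mul, ← Matrix.mul_kronecker_mul,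
      ← Matrix.mul_kronecker_mul, ← Matrix.mul_kronecker_mul]
    simp only [Matrix.mul_one, Matrix.one_mul]
    rw [Units.mul_inv, ← hMc]
  have main : ((1 : Matrix (Fin N) (Fin N) ℂ) ⊗ₖ A - Mc ⊗ₖ B).charpoly
      = ∏ i, (A - U i i • B).charpoly := by
    rw [hconj, my_charpoly_units_conj, kron_triangular_charpoly U hU]
  rw [main]
  -- multisets of diagonal entries agree with lam
  have hchU : U.charpoly = ∏ i, (X - C (U i i)) := Matrix.charpoly_of_upperTriangular U hU
  have hchMc : Mc.charpoly = U.charpoly := by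
    rw [hMc, my_charpoly_units_conj]
  have hmult : Multiset.map lam Finset.univ.val = Multiset.map (fun i => U i i) Finset.univ.val := by
    have h1 : (Multiset.map (fun a => X - C a) (Multiset.map lam Finset.univ.val)).prod
        = (Multiset.map (fun a => X - C a) (Multiset.map (fun i => U i i) Finset.univ.val)).prod := by
      rw [Multiset.map_map, Multiset.map_map]
      rw [show (Multiset.map ((fun a => X - C a) ∘ lam) Finset.univ.val).prod
          = ∏ i, (X - C (lam i)) from (Finset.prod_eq_multiset_prod _ _).symm]
      rw [show (Multiset.map ((fun a => X - C a) ∘ fun i => U i i) Finset.univ.val).prod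
          = ∏ i, (X - C (U i i)) from (Finset.prod_eq_multiset_prod _ _).symm]
      rw [← hlam, ← hchU, hchMc]
    have h2 := congrArg Polynomial.roots h1
    rwa [Polynomial.roots_multiset_prod_X_sub_C, Polynomial.roots_multiset_prod_X_sub_C] at h2
  have := congrArg (fun s => (Multiset.map (fun c => (A - c • B).charpoly) s).prod) hmult
  simp only [Multiset.map_map] at this
  rw [show (∏ i, (A - U i i • B).charpoly)
      = (Multiset.map ((fun c => (A - c • B).charpoly) ∘ fun i => U i i) Finset.univ.val).prod
      from Finset.prod_eq_multiset_prod _ _]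
  rw [show (∏ i, (A - lam i • B).charpoly)
      = (Multiset.map ((fun c => (A - c • B).charpoly) ∘ lam) Finset.univ.val).prod
      from Finset.prod_eq_multiset_prod _ _]
  exact this.symm

/-- If `M` has eigenvalues `λ₁, …, λ_N` (with multiplicity, over `ℂ`), then the
characteristic polynomial of `I_N ⊗ A - M ⊗ B` is the product of the characteristic
polynomials of the `A - λᵢ B`; in particular `I_N ⊗ A - M ⊗ B` is Hurwitz iff each
`A - λᵢ B` is Hurwitz. -/
theorem kronecker_charpoly_prod_and_hurwitz {N k : ℕ}
    (M : Matrix (Fin N) (Fin N) ℝ) (lam : Fin N → ℂ)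
    (hlam : (M.map (Complex.ofReal)).charpoly = ∏ i, (X - C (lam i)))
    (A B : Matrix (Fin k) (Fin k) ℂ) :
    ((1 : Matrix (Fin N) (Fin N) ℂ) ⊗ₖ A - (M.map (Complex.ofReal)) ⊗ₖ B).charpoly =
      ∏ i, (A - lam i • B).charpoly ∧
    ((∀ z : ℂ, (((1 : Matrix (Fin N) (Fin N) ℂ) ⊗ₖ A -
        (M.map (Complex.ofReal)) ⊗ₖ B).charpoly).IsRoot z → z.re < 0) ↔
      ∀ i, ∀ z : ℂ, ((A - lam i • B).charpoly).IsRoot z → z.re < 0) := by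
  have hmain := kronecker_charpoly_prod_and_hurwitz' (M.map (Complex.ofReal)) lam hlam
    (exists_triangular N (M.map (Complex.ofReal))) A B
  refine ⟨hmain, ?_⟩
  rw [hmain]
  constructor
  · intro h i z hz
    apply h
    unfold Polynomial.IsRoot at *
    rw [Polynomial.eval_prod]
    exact Finset.prod_eq_zero (Finset.mem_univ i) hz
  · intro h z hz
    unfold Polynomial.IsRoot at hz
    rw [Polynomial.eval_prod] at hz
    obtain ⟨i, _, hi⟩ := Finset.prod_eq_zero_iff.mp hz
    exact h i z hi
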